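/- Let θ = (k_r) be a lacunary sequence with limsup_r k_r/k_{r-1} = ∞. Then there exists a sequence of real numbers that is lacunarily statistically quasi-Cauchy (with respect to θ) but not statistically quasi-Cauchy. -/

import Mathlib

open Filter Finset Topology

/-- A sequence `x` converges statistically to `ℓ`. -/
def StatConvTo (x : ℕ → ℝ) (ℓ : ℝ) : Prop :=
  ∀ ε > 0, Tendsto (fun n : ℕ =>
      ((((Finset.range n).filter fun k => ε ≤ |x k - ℓ|).card : ℝ) / (n : ℝ)))
    atTop (𝓝 0)

/-- A sequence is statistically quasi-Cauchy if its difference sequence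
converges statistically to `0`. -/
def StatQC (a : ℕ → ℝ) : Prop :=
  StatConvTo (fun n => a (n + 1) - a n) 0

/-- A lacunary sequence `θ = (k_r)`: strictly increasing, `k 0 = 0`,
and `h_r = k_{r+1} - k_r → ∞`. -/
structure Lacunary where
  k : ℕ → ℕ
  strictMono : StrictMono k
  zero : k 0 = 0
  h_tendsto : Tendsto (fun r => k (r + 1) - k r) atTop atTop

/-- Lacunary statistical convergence of `x` to `ℓ` with respect to `θ`. -/
def LacStatConvTo (θ : Lacunary) (x : ℕ → ℝ) (ℓ : ℝ) : Prop :=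
  ∀ ε > 0, Tendsto (fun r : ℕ =>
      ((((Finset.Ioc (θ.k r) (θ.k (r + 1))).filter fun i => ε ≤ |x i - ℓ|).card : ℝ)
        / ((θ.k (r + 1) - θ.k r : ℕ) : ℝ)))
    atTop (𝓝 0)

/-- A sequence is lacunarily statistically quasi-Cauchy (w.r.t. `θ`). -/
def LacStatQC (θ : Lacunary) (a : ℕ → ℝ) : Prop :=
  LacStatConvTo θ (fun n => a (n + 1) - a n) 0

/-- `liminf q_r > 1` where `q_r = k_{r+1} / k_r`. -/
def LiminfQGtOne (θ : Lacunary) : Prop :=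
  ∃ a : ℝ, 1 < a ∧ ∀ᶠ r in atTop, a ≤ (θ.k (r + 1) : ℝ) / (θ.k r : ℝ)

/-- `limsup q_r < ∞` where `q_r = k_{r+1} / k_r`. -/
def LimsupQLtTop (θ : Lacunary) : Prop :=
  ∃ H : ℝ, ∀ᶠ r in atTop, (θ.k (r + 1) : ℝ) / (θ.k r : ℝ) ≤ H

/-- `A` is lacunarily statistically ward compact w.r.t. `θ`. -/
def LacStatWardCompact (θ : Lacunary) (A : Set ℝ) : Prop :=
  ∀ x : ℕ → ℝ, (∀ n, x n ∈ A) →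
    ∃ φ : ℕ → ℕ, StrictMono φ ∧ LacStatQC θ (x ∘ φ)

/-- `f` is lacunarily statistically ward continuous on `A` w.r.t. `θ`. -/
def LacStatWardContOn (θ : Lacunary) (f : ℝ → ℝ) (A : Set ℝ) : Prop :=
  ∀ x : ℕ → ℝ, (∀ n, x n ∈ A) → LacStatQC θ x → LacStatQC θ (f ∘ x)

theorem exists_lacStatQC_not_statQC (θ : Lacunary)
    (hθ : ∀ H : ℝ, ∃ᶠ r in atTop, H ≤ (θ.k (r + 1) : ℝ) / (θ.k r : ℝ)) :
    ∃ a : ℕ → ℝ, LacStatQC θ a ∧ ¬ StatQC a := by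
  classical
  obtain ⟨φ, hφ, hP⟩ := Filter.extraction_forall_of_frequently
    (fun j : ℕ => hθ ((j : ℝ) + 2))
  have hkmono := θ.strictMono
  -- k (φ j) > 0
  have hkpos : ∀ j, 0 < θ.k (φ j) := by
    intro j
    rcases Nat.eq_zero_or_pos (θ.k (φ j)) with h | h
    · exfalso
      have h2 := hP j
      rw [h] at h2
      norm_num at h2
      have : (0:ℝ) ≤ (j:ℝ) := Nat.cast_nonneg j
      linarith
    · exact h
  -- key ratio inequality
  have hratio : ∀ j : ℕ, ((j : ℝ) + 2) * (θ.k (φ j) : ℝ) ≤ (θ.k (φ j + 1) : ℝ) := by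
    intro j
    have hpos : (0:ℝ) < (θ.k (φ j) : ℝ) := by exact_mod_cast hkpos j
    have := hP j
    rwa [le_div_iff₀ hpos] at this
  have h2k : ∀ j, 2 * θ.k (φ j) ≤ θ.k (φ j + 1) := by
    intro j
    have h1 := hratio j
    have : ((2 * θ.k (φ j) : ℕ) : ℝ) ≤ (θ.k (φ j + 1) : ℝ) := by
      push_cast
      nlinarith [Nat.cast_nonneg (α := ℝ) j, Nat.cast_nonneg (α := ℝ) (θ.k (φ j))]
    exact_mod_cast this
  have hh : ∀ j : ℕ, ((j : ℝ) + 1) * (θ.k (φ j) : ℝ) ≤ ((θ.k (φ j + 1) - θ.k (φ j) : ℕ) : ℝ) := by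
    intro j
    have hle : θ.k (φ j) ≤ θ.k (φ j + 1) := (hkmono.monotone (Nat.le_succ _))
    rw [Nat.cast_sub hle]
    have := hratio j
    have hpos : (0:ℝ) ≤ (θ.k (φ j) : ℝ) := Nat.cast_nonneg _
    nlinarith
  -- the sequence
  set c : ℕ → ℝ := fun n =>
    if ∃ j, θ.k (φ j) < n ∧ n ≤ 2 * θ.k (φ j) then 1 else 0 with hc
  set a : ℕ → ℝ := fun n => ∑ m ∈ Finset.range n, c m with ha
  have hdiff : ∀ n, a (n + 1) - a n = c n := by
    intro n
    simp [ha, Finset.sum_range_succ]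
  have hc01 : ∀ n, c n = 0 ∨ c n = 1 := by
    intro n
    by_cases h : ∃ j, θ.k (φ j) < n ∧ n ≤ 2 * θ.k (φ j)
    · right; simp [hc, h]
    · left; simp [hc, h]
  -- uniqueness of the block containing a "bad" point
  have huniq : ∀ r j n, θ.k r < n → n ≤ θ.k (r + 1) →
      θ.k (φ j) < n → n ≤ 2 * θ.k (φ j) → r = φ j := by
    intro r j n h1 h2 h3 h4
    have h5 : n ≤ θ.k (φ j + 1) := le_trans h4 (h2k j)
    by_contra hne
    rcases lt_or_gt_of_ne hne with h | h
    · have : θ.k (r + 1) ≤ θ.k (φ j) := hkmono.monotone (Nat.succ_le_of_lt h)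
      omega
    · have : θ.k (φ j + 1) ≤ θ.k r := hkmono.monotone (Nat.succ_le_of_lt h)
      omega
  refine ⟨a, ?_, ?_⟩
  · -- LacStatQC
    intro ε hε
    rw [Metric.tendsto_atTop]
    intro δ hδ
    obtain ⟨J, hJ⟩ := exists_nat_one_div_lt (K := ℝ) hδ
    refine ⟨φ J, fun r hr => ?_⟩
    set F := (Finset.Ioc (θ.k r) (θ.k (r + 1))).filter
      fun i => ε ≤ |(fun n => a (n + 1) - a n) i - 0| with hF
    have hFmem : ∀ i ∈ F, ∃ j, θ.k (φ j) < i ∧ i ≤ 2 * θ.k (φ j) ∧ r = φ j := by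
      intro i hi
      rw [hF, Finset.mem_filter, Finset.mem_Ioc] at hi
      obtain ⟨⟨hi1, hi2⟩, hi3⟩ := hi
      simp only [hdiff, sub_zero] at hi3
      rcases hc01 i with h0 | h1
      · rw [h0] at hi3; simp at hi3; linarith
      · have : ∃ j, θ.k (φ j) < i ∧ i ≤ 2 * θ.k (φ j) := by
          by_contra hcon
          simp only [hc, if_neg hcon] at h1
          norm_num at h1
        obtain ⟨j, hj1, hj2⟩ := this
        exact ⟨j, hj1, hj2, huniq r j i hi1 hi2 hj1 hj2⟩
    by_cases hex : ∃ j, r = φ j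
    · obtain ⟨j, rfl⟩ := hex
      have hjJ : J ≤ j := by
        by_contra hlt
        push_neg at hlt
        exact absurd hr (not_le.mpr (hφ hlt))
      -- F ⊆ Ioc (k (φ j)) (2 * k (φ j))
      have hsub : F ⊆ Finset.Ioc (θ.k (φ j)) (2 * θ.k (φ j)) := by
        intro i hi
        obtain ⟨j', h1, h2, h3⟩ := hFmem i hi
        have : j' = j := hφ.injective h3.symm
        subst this
        exact Finset.mem_Ioc.mpr ⟨h1, h2⟩
      have hcard : (F.card : ℝ) ≤ (θ.k (φ j) : ℝ) := by
        have := Finset.card_le_card hsub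
        rw [Nat.card_Ioc] at this
        have h2 : 2 * θ.k (φ j) - θ.k (φ j) = θ.k (φ j) := by omega
        rw [h2] at this
        exact_mod_cast this
      have hkR : (0:ℝ) < (θ.k (φ j) : ℝ) := by exact_mod_cast hkpos j
      have hhpos : (0:ℝ) < ((θ.k (φ j + 1) - θ.k (φ j) : ℕ) : ℝ) := by
        have := hh j
        nlinarith [Nat.cast_nonneg (α := ℝ) j]
      have hfle : (F.card : ℝ) / ((θ.k (φ j + 1) - θ.k (φ j) : ℕ) : ℝ)
          ≤ 1 / ((j : ℝ) + 1) := by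
        have hd : (0:ℝ) < ((j:ℝ) + 1) * (θ.k (φ j) : ℝ) := by positivity
        calc (F.card : ℝ) / ((θ.k (φ j + 1) - θ.k (φ j) : ℕ) : ℝ)
            ≤ (θ.k (φ j) : ℝ) / (((j:ℝ) + 1) * (θ.k (φ j) : ℝ)) :=
              div_le_div₀ (le_of_lt hkR) hcard hd (hh j)
          _ = 1 / ((j : ℝ) + 1) := by
              field_simp
        
      have hnonneg : (0:ℝ) ≤ (F.card : ℝ) / ((θ.k (φ j + 1) - θ.k (φ j) : ℕ) : ℝ) := by
        positivity
      rw [Real.dist_eq, sub_zero, abs_of_nonneg hnonneg]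
      have : 1 / ((j : ℝ) + 1) ≤ 1 / ((J : ℝ) + 1) := by
        apply div_le_div_of_nonneg_left one_pos.le (by positivity)
        exact_mod_cast Nat.succ_le_succ hjJ
      linarith
    · -- F is empty
      have : F = ∅ := by
        rw [Finset.eq_empty_iff_forall_notMem]
        intro i hi
        obtain ⟨j, _, _, h3⟩ := hFmem i hi
        exact hex ⟨j, h3⟩
      rw [Real.dist_eq, sub_zero, this]
      simpa using hδ
  · -- ¬ StatQC
    intro hs
    have h1 := hs 1 one_pos
    have hev := h1.eventually_lt_const (show (0:ℝ) < 1/3 by norm_num)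
    rw [Filter.eventually_atTop] at hev
    obtain ⟨N, hN⟩ := hev
    set n := 2 * θ.k (φ N) + 1 with hn
    have hkN : 1 ≤ θ.k (φ N) := hkpos N
    have hNk : N ≤ θ.k (φ N) := le_trans (hφ.le_apply) (hkmono.le_apply)
    have hnN : N ≤ n := by omega
    have hcontra := hN n hnN
    -- lower bound on the count
    set F := (Finset.range n).filter
      fun m => 1 ≤ |(fun i => a (i + 1) - a i) m - 0| with hF
    have hsub : Finset.Ioc (θ.k (φ N)) (2 * θ.k (φ N)) ⊆ F := by
      intro m hm
      rw [Finset.mem_Ioc] at hm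
      rw [hF, Finset.mem_filter, Finset.mem_range]
      refine ⟨by omega, ?_⟩
      simp only [hdiff, sub_zero]
      have : c m = 1 := by
        rw [hc]
        exact if_pos ⟨N, hm.1, hm.2⟩
      rw [this]
      norm_num
    have hcard : (θ.k (φ N) : ℝ) ≤ (F.card : ℝ) := by
      have := Finset.card_le_card hsub
      rw [Nat.card_Ioc] at this
      have h2 : 2 * θ.k (φ N) - θ.k (φ N) = θ.k (φ N) := by omega
      rw [h2] at this
      exact_mod_cast this
    have hnpos : (0:ℝ) < (n : ℝ) := by
      have : 0 < n := by omega
      exact_mod_cast this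
    have hge : (1:ℝ)/3 ≤ (F.card : ℝ) / (n : ℝ) := by
      rw [div_le_div_iff₀ (by norm_num) hnpos]
      have hkNr : (1:ℝ) ≤ (θ.k (φ N) : ℝ) := by exact_mod_cast hkN
      have hnr : (n : ℝ) = 2 * (θ.k (φ N) : ℝ) + 1 := by rw [hn]; push_cast; ring
      nlinarith
    linarith
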